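/- Let M be a C-set with canonical tree T(M) and let A ⊆ T be an antichain. Define the ternary relation C_A on A by C_A(x,y,z) iff inf(y,z) > inf(x,y) (infima taken in T(M)). Then (A, C_A) is a C-set, and the map sending a pair (a,b) ∈ A² to inf(a,b) induces an order isomorphism between the canonical tree of (A, C_A) and the closure cl_inf(A) of A under binary infima in T(M), under which the leaves of the canonical tree of (A, C_A) correspond to the elements of A. -/

import Mathlib

namespace CMinPaper

open FirstOrder Language Structure Set

universe u v w

/-! ### The language with a single ternary relation symbol `C` -/

/-- The first-order language whose only symbol is one ternary relation symbol. -/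
def cLang : FirstOrder.Language :=
  { Functions := fun _ => Empty
    Relations := fun n => PLift (n = 3) }

/-- The `cLang`-structure on a set determined by a ternary relation. -/
def cStructure {N : Type w} (R : N → N → N → Prop) : cLang.Structure N where
  funMap := fun f _ => f.elim
  RelMap := fun {n} r v =>
    match n, r, v with
    | _, ⟨rfl⟩, v => R (v 0) (v 1) (v 2)

/-! ### C-sets -/

/-- The axioms (C1)-(C4) of a `C`-set. -/
structure IsCSet {M : Type u} (C : M → M → M → Prop) : Prop where
  c1 : ∀ x y z, C x y z → C x z y
  c2 : ∀ x y z, C x y z → ¬ C y x z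
  c3 : ∀ x y z w, C x y z → C w y z ∨ C x w z
  c4 : ∀ x y, x ≠ y → C x y y

/-- A dense `C`-set: a `C`-set with at least two elements satisfying axiom (D). -/
structure IsDenseCSet {M : Type u} (C : M → M → M → Prop) extends IsCSet C : Prop where
  nontrivial : ∃ x y : M, x ≠ y
  denseAx : ∀ x y : M, x ≠ y → ∃ z, z ≠ y ∧ C x y z

variable {M : Type u}

/-! ### The canonical tree -/

/-- The set `Λ(α,β) = {x | ¬ C(x,α,β)}`. -/
def lamSet (C : M → M → M → Prop) (α β : M) : Set M := {x : M | ¬ C x α β}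

/-- The canonical tree `T(M)` of a `C`-set: the collection of all sets `Λ(α,β)`,
ordered by reverse inclusion. -/
def Node (C : M → M → M → Prop) : Type u := {s : Set M // ∃ α β : M, s = lamSet C α β}

instance {C : M → M → M → Prop} : PartialOrder (Node C) where
  le a b := b.1 ⊆ a.1
  le_refl a := subset_rfl
  le_trans a b c h1 h2 := Set.Subset.trans h2 h1
  le_antisymm a b h1 h2 := Subtype.ext (Set.Subset.antisymm h2 h1)

/-- The node `inf(α,β) = Λ(α,β)` of the canonical tree, coded by the pair `(α,β)`. -/
def node (C : M → M → M → Prop) (α β : M) : Node C := ⟨lamSet C α β, α, β, rfl⟩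

/-- The leaf `Λ(α,α) = {α}` of the canonical tree corresponding to `α ∈ M`. -/
def leafN (C : M → M → M → Prop) (α : M) : Node C := node C α α

/-- A node of the canonical tree is a leaf when it is a singleton. The set `T` of the
paper is the set of nodes which are not leaves. -/
def IsLeaf (C : M → M → M → Prop) (a : Node C) : Prop := ∃ α : M, a.1 = {α}

/-- The branch `Br(α) = {a ∈ T(M) : a ≤ α}` of a point `α ∈ M`. -/
def Br (C : M → M → M → Prop) (α : M) : Set (Node C) := {a : Node C | a ≤ leafN C α}

/-- `IsInfN C a b m` says that `m` is the infimum of the nodes `a` and `b` in `T(M)`. -/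
def IsInfN (C : M → M → M → Prop) (a b m : Node C) : Prop :=
  m ≤ a ∧ m ≤ b ∧ ∀ d : Node C, d ≤ a → d ≤ b → d ≤ m

/-! ### Cones, 0-level sets, intervals, n-level sets -/

/-- The cone `Γ_a(α) = {β ∈ M : a < inf(α,β)}` of `α` at `a`, as a subset of `M`. -/
def coneSet (C : M → M → M → Prop) (a : Node C) (α : M) : Set M :=
  {β : M | a < node C α β}

/-- `s` is a cone at the node `a`. -/
def IsConeAt (C : M → M → M → Prop) (a : Node C) (s : Set M) : Prop :=
  ∃ α : M, a < leafN C α ∧ s = coneSet C a α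

/-- `s` is a cone (including `M` itself, the cone at `-∞`). -/
def IsCone (C : M → M → M → Prop) (s : Set M) : Prop :=
  s = Set.univ ∨ ∃ a : Node C, IsConeAt C a s

/-- The 0-level set `Λ_a`, viewed as a subset of `M`. -/
def lamM (C : M → M → M → Prop) (a : Node C) : Set M := {β : M | a ≤ leafN C β}

/-- `Λ_a(α)`: the 0-level set at `a` with the cone of `α` at `a` removed, in `M`. -/
def lamMinus (C : M → M → M → Prop) (a : Node C) (α : M) : Set M :=
  lamM C a \ coneSet C a α

/-- The cone `Γ_a(b)` of a node `b` at `a`, as a set of leaves: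
`{β ∈ M : a < inf(b, β)}`. -/
def coneSetN (C : M → M → M → Prop) (a b : Node C) : Set M :=
  {β : M | ∃ m : Node C, IsInfN C b (leafN C β) m ∧ a < m}

/-- The interval `(a,b) = Γ_a(b) ∖ Λ_b` in `M`, where `a ∈ T(M) ∪ {-∞}`
(`a = none` is `-∞`). -/
def intervalM (C : M → M → M → Prop) (a : Option (Node C)) (b : Node C) : Set M :=
  (match a with
    | none => Set.univ
    | some a' => coneSetN C a' b) \ lamM C b

/-- An `n`-level set at `a`: `Λ_a` with `n` pairwise distinct cones at `a` removed. -/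
def IsNLevelSet (C : M → M → M → Prop) (n : ℕ) (s : Set M) : Prop :=
  ∃ (a : Node C) (γ : Fin n → Set M), Function.Injective γ ∧
    (∀ i, IsConeAt C a (γ i)) ∧ s = lamM C a \ ⋃ i, γ i

/-! ### 1-cells of `M` -/

/-- The possible types of pieces of a 1-cell. -/
inductive PieceType where
  | point : PieceType
  | cone : PieceType
  | interval : PieceType
  | level : ℕ → PieceType

/-- `s` is a piece of the given type. -/
def IsPiece (C : M → M → M → Prop) : PieceType → Set M → Prop
  | PieceType.point, s => ∃ α : M, s = {α}
  | PieceType.cone, s => IsCone C s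
  | PieceType.interval, s => (∃ b : Node C, s = intervalM C none b) ∨
      (∃ a b : Node C, a < b ∧ s = intervalM C (some a) b)
  | PieceType.level n, s => IsNLevelSet C n s

/-- A 1-cell: a definable subset of `M` which is a finite union of pieces of one single
type among singletons, cones, intervals and `n`-level sets. Here `defin` is the ambient
notion of definable subset of `M`. -/
def IsCell1 (C : M → M → M → Prop) (defin : Set M → Prop) (s : Set M) : Prop :=
  defin s ∧ ∃ (t : PieceType) (k : ℕ) (p : Fin k → Set M),
    (∀ i, IsPiece C t (p i)) ∧ s = ⋃ i, p i

/-! ### Ambient hypotheses on the canonical tree -/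

/-- `bn(a) ≥ ℵ₀` for every `a ∈ T`: every non-leaf node has infinitely many cones. -/
def BranchesInfinite (C : M → M → M → Prop) : Prop :=
  ∀ a : Node C, ¬ IsLeaf C a → {s : Set M | IsConeAt C a s}.Infinite

/-- Every branch `Br(α)` is densely ordered. -/
def BranchesDense (C : M → M → M → Prop) : Prop :=
  ∀ (α : M) (a b : Node C), a ≤ leafN C α → b ≤ leafN C α → a < b →
    ∃ d : Node C, a < d ∧ d < b

/-- A partial function `f` with domain `D` is locally constant when every point of `D` has
a cone around it on which `f` is constant. -/
def LocConstOn (C : M → M → M → Prop) {β : Type*} (D : Set M) (f : M → β) : Prop :=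
  ∀ α ∈ D, ∃ Γ : Set M, IsCone C Γ ∧ α ∈ Γ ∧ ∀ x ∈ Γ ∩ D, f x = f α

/-! ### Definability -/

section Definability

variable (L : FirstOrder.Language.{v, w}) [L.Structure M]

/-- A subset of `M` definable with parameters. -/
def DefinableM (s : Set M) : Prop := Set.Definable₁ (Set.univ : Set M) L s

/-- A subset of the canonical tree is definable when the corresponding set of codes
(a node `inf(β,γ)` being coded by the pair `(β,γ)`) is definable with parameters. -/
def DefinableNodeSet (C : M → M → M → Prop) (S : Set (Node C)) : Prop :=
  Set.Definable (Set.univ : Set M) L {p : Fin 2 → M | node C (p 0) (p 1) ∈ S}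

/-- A partial function `f : M → T(M)` with domain `D` is definable when its graph,
with nodes coded by pairs, is definable with parameters. -/
def DefinablePFunTree (C : M → M → M → Prop) (D : Set M) (f : M → Node C) : Prop :=
  Set.Definable (Set.univ : Set M) L
    {p : Fin 3 → M | p 0 ∈ D ∧ f (p 0) = node C (p 1) (p 2)}

/-- A function `g` defined on a subset `A` of the canonical tree, with values in the
canonical tree, is definable when its graph (on codes) is definable with parameters. -/
def DefinableNodeFun (C : M → M → M → Prop) (A : Set (Node C)) (g : Node C → Node C) :
    Prop :=
  Set.Definable (Set.univ : Set M) L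
    {p : Fin 4 → M | node C (p 0) (p 1) ∈ A ∧ g (node C (p 0) (p 1)) = node C (p 2) (p 3)}

end Definability

/-- `s ⊆ N` is definable by a quantifier-free formula with parameters in the language
containing only the ternary relation interpreted as `R`. -/
def QFCDefinable {N : Type w} (R : N → N → N → Prop) (s : Set N) : Prop :=
  ∃ (k : ℕ) (φ : cLang.BoundedFormula (Fin k) 1) (xs : Fin k → N),
    φ.IsQF ∧ s = {x : N | @BoundedFormula.Realize cLang N (cStructure R) _ _ φ xs (fun _ => x)}

/-- `M` is `C`-minimal (with `C` the interpretation of the relation symbol `c`):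
in every elementarily equivalent structure, every subset definable with parameters is
quantifier-free definable using only the relation `C`. -/
def CMinimal (L : FirstOrder.Language.{v, w}) (M : Type u) [L.Structure M]
    (c : L.Relations 3) : Prop :=
  ∀ (N : Type u) [L.Structure N], (M ≅[L] N) →
    ∀ s : Set N, Set.Definable₁ (Set.univ : Set N) L s →
      QFCDefinable (fun x y z : N => RelMap c ![x, y, z]) s

/-! ### The induced C-relation on an antichain, infima closure -/

/-- The relation `C_A(x,y,z) ↔ inf(y,z) > inf(x,y)` induced on (an antichain of) the
canonical tree. -/
def CInd (C : M → M → M → Prop) (x y z : Node C) : Prop :=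
  ∃ m₁ m₂ : Node C, IsInfN C y z m₁ ∧ IsInfN C x y m₂ ∧ m₂ < m₁

/-- The induced `C`-relation, as a ternary relation on an antichain `A`. -/
def CIndRel (C : M → M → M → Prop) (A : Set (Node C)) : ↥A → ↥A → ↥A → Prop :=
  fun x y z => CInd C x.1 y.1 z.1

/-- The closure `cl_inf(A)` of a subset of the canonical tree under binary infima. -/
inductive InfClosure (C : M → M → M → Prop) (A : Set (Node C)) : Node C → Prop
  | base {a : Node C} : a ∈ A → InfClosure C A a
  | inf {a b m : Node C} : InfClosure C A a → InfClosure C A b → IsInfN C a b m →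
      InfClosure C A m

/-- A cone of the `C`-set `(A, C_A)` induced on an antichain `A` (including `A` itself,
the cone at `-∞`): `Γ_{inf(a,b)}(a) = {x ∈ A : C_A(b,x,a)}`. -/
def ConeInAntichain (C : M → M → M → Prop) (A : Set (Node C)) (S : Set (Node C)) : Prop :=
  S = A ∨ ∃ a ∈ A, ∃ b ∈ A, a ≠ b ∧ S = {x ∈ A | CInd C b x a}

/-! ### Incomparable chains and t-functions -/

/-- A finite set `𝔠` of definable chains of `T` is a set of *incomparable chains* if
(a) elements of distinct chains are incomparable, (b) the antichain
`A = {inf(lp C₀, lp C₁)}` of infima of left endpoints is an antichain on which the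
automorphism group of the induced `C`-set acts transitively, and (c) each `a ∈ A` lies
strictly below elements of exactly `k` chains of `𝔠`. -/
def IsIncompChainSet (C : M → M → M → Prop) (defin : Set (Node C) → Prop)
    (𝔠 : Set (Set (Node C))) : Prop :=
  𝔠.Finite ∧
  (∀ B ∈ 𝔠, IsChain (· ≤ ·) B ∧ defin B) ∧
  (∀ B₁ ∈ 𝔠, ∀ B₂ ∈ 𝔠, B₁ ≠ B₂ → ∀ x ∈ B₁, ∀ y ∈ B₂, ¬ x ≤ y ∧ ¬ y ≤ x) ∧
  ∃ lp : Set (Node C) → WithBot (Node C),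
    (∀ B ∈ 𝔠, IsGLB ((fun a : Node C => (a : WithBot (Node C))) '' B) (lp B)) ∧
    ∀ A : Set (Node C),
      (∀ x : Node C, x ∈ A ↔
        ∃ B₁ ∈ 𝔠, ∃ B₂ ∈ 𝔠, B₁ ≠ B₂ ∧ IsGLB {lp B₁, lp B₂} (x : WithBot (Node C))) →
      IsAntichain (· ≤ ·) A ∧
      (∀ (a : Node C) (ha : a ∈ A) (b : Node C) (hb : b ∈ A), ∃ g : ↥A ≃ ↥A,
        (∀ x y z : ↥A, CIndRel C A x y z ↔ CIndRel C A (g x) (g y) (g z)) ∧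
        g ⟨a, ha⟩ = ⟨b, hb⟩) ∧
      ∃ k : ℕ, ∀ a ∈ A, {B ∈ 𝔠 | ∃ x ∈ B, a < x}.ncard = k

/-- A definable function on a definable antichain `A ⊆ T` is a *t-function* when its
image is an antichain or the union of a finite set of incomparable chains. -/
def IsTFunction (C : M → M → M → Prop) (defin : Set (Node C) → Prop)
    (A : Set (Node C)) (f : Node C → Node C) : Prop :=
  IsAntichain (· ≤ ·) (f '' A) ∨
    ∃ 𝔠 : Set (Set (Node C)), IsIncompChainSet C defin 𝔠 ∧ f '' A = ⋃₀ 𝔠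

/-! ### 1-cells of the canonical tree -/

/-- A 1-cell of `T`: the image, or the set of points strictly between the values of,
two definable t-functions `g < f` on a definable antichain `A ⊆ T`. -/
def IsCellT (C : M → M → M → Prop) (definN : Set (Node C) → Prop)
    (definFun : Set (Node C) → (Node C → Node C) → Prop) (X : Set (Node C)) : Prop :=
  ∃ (A : Set (Node C)) (f g : Node C → Node C),
    definN A ∧ IsAntichain (· ≤ ·) A ∧ (∀ a ∈ A, ¬ IsLeaf C a) ∧
    definFun A f ∧ definFun A g ∧
    IsTFunction C definN A f ∧ IsTFunction C definN A g ∧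
    (∀ a ∈ A, ¬ IsLeaf C (f a)) ∧ (∀ a ∈ A, ¬ IsLeaf C (g a)) ∧
    (∀ a ∈ A, g a < f a) ∧
    (X = f '' A ∨ X = {t : Node C | ∃ a ∈ A, g a < t ∧ t < f a})

/-! ### C-isomorphisms and algebraic closure -/

/-- A function from a subset `S` of `M` to the canonical tree is a `C`-isomorphism on `S`
if it is injective, has antichain image, and transports the relation `C` to the induced
relation `C_A` on the image antichain. -/
def IsCIsoOn (C : M → M → M → Prop) (S : Set M) (f : M → Node C) : Prop :=
  Set.InjOn f S ∧ IsAntichain (· ≤ ·) (f '' S) ∧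
    ∀ x ∈ S, ∀ y ∈ S, ∀ z ∈ S, (C x y z ↔ CInd C (f x) (f y) (f z))

/-- `f` is a local `C`-isomorphism on `D`. -/
def LocalCIsoOn (C : M → M → M → Prop) (D : Set M) (f : M → Node C) : Prop :=
  ∀ α ∈ D, ∃ Γ : Set M, IsCone C Γ ∧ α ∈ Γ ∧ IsCIsoOn C (Γ ∩ D) f

/-- The model-theoretic algebraic closure of `A`: the union of all finite `A`-definable
subsets. -/
def aclSet (L : FirstOrder.Language.{v, w}) (N : Type u) [L.Structure N] (A : Set N) :
    Set N :=
  ⋃₀ {s : Set N | s.Finite ∧ Set.Definable₁ A L s}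

/-! ### Intervals of a chain of the canonical tree -/

/-- An interval of a chain `B ⊆ T(M)`: a nonempty convex subset of `B`, open in the
order topology of `B`, which is not a single point. -/
def IsIntervalIn (C : M → M → M → Prop) (B I : Set (Node C)) : Prop :=
  I ⊆ B ∧ I.Nonempty ∧ (¬ ∃ x, I = {x}) ∧
  (∀ x ∈ I, ∀ y ∈ I, ∀ z ∈ B, x ≤ z → z ≤ y → z ∈ I) ∧
  (∀ x ∈ I,
    ((∀ y ∈ B, ¬ y < x) ∨ ∃ a ∈ B, a < x ∧ ∀ y ∈ B, a < y → y ≤ x → y ∈ I) ∧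
    ((∀ y ∈ B, ¬ x < y) ∨ ∃ b ∈ B, x < b ∧ ∀ y ∈ B, x ≤ y → y < b → y ∈ I))

/-- The family of subsets of `T` defined by a formula `φ(t, y)` (given by its set `Φ` of
codes) at the parameter `α`. -/
def nodeFam (C : M → M → M → Prop) {k : ℕ} (Φ : Set (Fin (2 + k) → M))
    (α : Fin k → M) : Set (Node C) :=
  {x : Node C | ¬ IsLeaf C x ∧ ∃ β γ : M, x = node C β γ ∧ Fin.append ![β, γ] α ∈ Φ}

/-! ### Valued fields -/

/-- `v` is a surjective nontrivial valuation on `K` with value group `Γ`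
(written additively, with `v 0 = ⊤`). -/
structure IsValuationOn (K : Type u) [Field K] (Γ : Type v)
    [AddCommGroup Γ] [LinearOrder Γ] [IsOrderedAddMonoid Γ] (v : K → WithTop Γ) : Prop where
  top_iff : ∀ x : K, v x = ⊤ ↔ x = 0
  map_mul : ∀ x y : K, v (x * y) = v x + v y
  add_min : ∀ x y : K, min (v x) (v y) ≤ v (x + y)
  surj : ∀ g : Γ, ∃ x : K, v x = (g : WithTop Γ)
  nontriv : ∃ x : K, x ≠ 0 ∧ v x ≠ (0 : WithTop Γ)

/-- The canonical `C`-relation of a valued field: `C(x,y,z)` iff `v(y−z) > v(x−z)`. -/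
def vC {K : Type u} [Field K] {Γ : Type v} [AddCommGroup Γ] [LinearOrder Γ] [IsOrderedAddMonoid Γ]
    (v : K → WithTop Γ) : K → K → K → Prop :=
  fun x y z => v (x - z) < v (y - z)

/-- The coset relation `v(x−y) > 0` on the valuation ring, defining the residue field. -/
def resRel {K : Type u} [Field K] {Γ : Type v} [AddCommGroup Γ] [LinearOrder Γ] [IsOrderedAddMonoid Γ]
    (v : K → WithTop Γ) :
    {x : K // (0 : WithTop Γ) ≤ v x} → {x : K // (0 : WithTop Γ) ≤ v x} → Prop :=
  fun a b => (0 : WithTop Γ) < v (a.1 - b.1)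

/-- The residue field `K/v`: the valuation ring modulo the coset relation `v(x−y) > 0`. -/
def ResField {K : Type u} [Field K] {Γ : Type v} [AddCommGroup Γ] [LinearOrder Γ] [IsOrderedAddMonoid Γ]
    (v : K → WithTop Γ) : Type u :=
  Quot (resRel v)

/-- The residue `x/v` of `x ∈ K`: its class in `K/v` when `x` lies in the valuation
ring (and the class of `0` otherwise, as a junk value). -/
noncomputable def resOf {K : Type u} [Field K] {Γ : Type v}
    [AddCommGroup Γ] [LinearOrder Γ] [IsOrderedAddMonoid Γ] {v : K → WithTop Γ}
    (hv : IsValuationOn K Γ v) (x : K) : ResField v := by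
  classical
  exact if hx : (0 : WithTop Γ) ≤ v x then Quot.mk _ ⟨x, hx⟩
    else Quot.mk _ ⟨0, by rw [(hv.top_iff 0).mpr rfl]; exact le_top⟩


section Statement16Aux

variable {M : Type u} {C : M → M → M → Prop}

lemma not_C_self (hC : IsCSet C) (x y : M) : ¬ C x x y := fun h => hC.c2 x x y h h

lemma mem_lamSet_left (hC : IsCSet C) (α β : M) : α ∈ lamSet C α β :=
  not_C_self hC α β

lemma mem_lamSet_right (hC : IsCSet C) (α β : M) : β ∈ lamSet C α β :=
  fun h => not_C_self hC β α (hC.c1 _ _ _ h)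

lemma two_c_contra (hC : IsCSet C) {x y z : M} (h1 : C y x z) (h2 : C z x y) : False :=
  hC.c2 y z x (hC.c1 _ _ _ h1) (hC.c1 _ _ _ h2)

lemma lam_step (hC : IsCSet C) {α β γ δ x : M}
    (hγ : γ ∈ lamSet C α β) (hδ : δ ∈ lamSet C α β) (hx : C x α β) : C x γ δ := by
  have hγ' : ¬ C γ α β := hγ
  have hδ' : ¬ C δ α β := hδ
  have h1' : C x β γ := hC.c1 _ _ _ ((hC.c3 x α β γ hx).resolve_left hγ')
  have h2' : C x β δ := hC.c1 _ _ _ ((hC.c3 x α β δ hx).resolve_left hδ')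
  by_contra hxgd
  have hA : C δ β γ := (hC.c3 x β γ δ h1').resolve_right (fun h => hxgd (hC.c1 _ _ _ h))
  have hB : C γ β δ := (hC.c3 x β δ γ h2').resolve_right hxgd
  exact hC.c2 γ δ β (hC.c1 _ _ _ hB) (hC.c1 _ _ _ hA)

lemma lam_subset (hC : IsCSet C) {α β γ δ : M}
    (hγ : γ ∈ lamSet C α β) (hδ : δ ∈ lamSet C α β) :
    lamSet C γ δ ⊆ lamSet C α β :=
  fun _ hx hcon => hx (lam_step hC hγ hδ hcon)

lemma lam_nested (hC : IsCSet C) {α β γ δ x : M}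
    (h1 : x ∈ lamSet C α β) (h2 : x ∈ lamSet C γ δ) :
    lamSet C α β ⊆ lamSet C γ δ ∨ lamSet C γ δ ⊆ lamSet C α β := by
  by_cases h : lamSet C α β ⊆ lamSet C γ δ
  · exact Or.inl h
  · right
    rw [Set.not_subset] at h
    obtain ⟨y, hy1, hy2⟩ := h
    intro z hz
    by_contra hzc
    have hz1 : C z α β := not_not.mp hzc
    have hzxy : C z x y := lam_step hC h1 hy1 hz1
    have hy3 : C y γ δ := not_not.mp hy2
    have hyxz : C y x z := lam_step hC h2 hz hy3
    exact two_c_contra hC hyxz hzxy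

lemma node_nonempty (hC : IsCSet C) (a : Node C) : a.1.Nonempty := by
  obtain ⟨α, β, h⟩ := a.2
  exact ⟨α, h ▸ mem_lamSet_left hC α β⟩

lemma node_mem_subset (hC : IsCSet C) {a : Node C} {α γ : M}
    (hα : α ∈ a.1) (hγ : γ ∈ a.1) : lamSet C α γ ⊆ a.1 := by
  obtain ⟨α', β', h⟩ := a.2
  rw [h] at hα hγ ⊢
  exact lam_subset hC hα hγ

lemma nodes_nested (hC : IsCSet C) {a b : Node C} (h : (a.1 ∩ b.1).Nonempty) :
    a.1 ⊆ b.1 ∨ b.1 ⊆ a.1 := by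
  obtain ⟨x, hxa, hxb⟩ := h
  obtain ⟨α, β, ha⟩ := a.2
  obtain ⟨γ, δ, hb⟩ := b.2
  rw [ha] at hxa ⊢
  rw [hb] at hxb ⊢
  exact lam_nested hC hxa hxb

lemma node_le_def {a b : Node C} : a ≤ b ↔ b.1 ⊆ a.1 := Iff.rfl

lemma isInfN_iff {a b m : Node C} : IsInfN C a b m ↔
    a.1 ⊆ m.1 ∧ b.1 ⊆ m.1 ∧ ∀ d : Node C, a.1 ⊆ d.1 → b.1 ⊆ d.1 → m.1 ⊆ d.1 := Iff.rfl

lemma isInfN_self (a : Node C) : IsInfN C a a a :=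
  ⟨le_rfl, le_rfl, fun _ h _ => h⟩

lemma exists_isInfN (hC : IsCSet C) (a b : Node C) : ∃ m : Node C, IsInfN C a b m := by
  obtain ⟨α, hα⟩ := node_nonempty hC a
  obtain ⟨γ, hγ⟩ := node_nonempty hC b
  have hαu : α ∈ (node C α γ).1 := mem_lamSet_left hC α γ
  have hγu : γ ∈ (node C α γ).1 := mem_lamSet_right hC α γ
  rcases nodes_nested hC (a := a) (b := node C α γ) ⟨α, hα, hαu⟩ with hau | hau
  · rcases nodes_nested hC (a := b) (b := node C α γ) ⟨γ, hγ, hγu⟩ with hbu | hbu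
    · exact ⟨node C α γ, isInfN_iff.mpr ⟨hau, hbu,
        fun d hda hdb => node_mem_subset hC (hda hα) (hdb hγ)⟩⟩
    · exact ⟨b, isInfN_iff.mpr ⟨hau.trans hbu, subset_rfl, fun d _ hdb => hdb⟩⟩
  · rcases nodes_nested hC (a := a) (b := b) ⟨γ, hau hγu, hγ⟩ with h | h
    · exact ⟨b, isInfN_iff.mpr ⟨h, subset_rfl, fun d _ hdb => hdb⟩⟩
    · exact ⟨a, isInfN_iff.mpr ⟨subset_rfl, h, fun d hda _ => hda⟩⟩

lemma isInfN_unique {a b m m' : Node C} (h : IsInfN C a b m) (h' : IsInfN C a b m') :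
    m = m' :=
  le_antisymm (h'.2.2 m h.1 h.2.1) (h.2.2 m' h'.1 h'.2.1)

noncomputable def infN (hC : IsCSet C) (a b : Node C) : Node C :=
  (exists_isInfN hC a b).choose

lemma infN_spec (hC : IsCSet C) (a b : Node C) : IsInfN C a b (infN hC a b) :=
  (exists_isInfN hC a b).choose_spec

lemma infN_eq_of (hC : IsCSet C) {a b m : Node C} (h : IsInfN C a b m) :
    infN hC a b = m := isInfN_unique (infN_spec hC a b) h

lemma infN_le_left (hC : IsCSet C) (a b : Node C) : infN hC a b ≤ a :=
  (infN_spec hC a b).1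

lemma infN_le_right (hC : IsCSet C) (a b : Node C) : infN hC a b ≤ b :=
  (infN_spec hC a b).2.1

lemma le_infN (hC : IsCSet C) {d a b : Node C} (h1 : d ≤ a) (h2 : d ≤ b) :
    d ≤ infN hC a b := (infN_spec hC a b).2.2 d h1 h2

lemma infN_comm (hC : IsCSet C) (a b : Node C) : infN hC a b = infN hC b a :=
  infN_eq_of hC ⟨(infN_spec hC b a).2.1, (infN_spec hC b a).1,
    fun d h1 h2 => (infN_spec hC b a).2.2 d h2 h1⟩

lemma infN_self (hC : IsCSet C) (a : Node C) : infN hC a a = a :=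
  infN_eq_of hC (isInfN_self a)

lemma comparable_of_le (hC : IsCSet C) {a c c' : Node C} (h1 : c ≤ a) (h2 : c' ≤ a) :
    c ≤ c' ∨ c' ≤ c := by
  obtain ⟨α, hα⟩ := node_nonempty hC a
  rcases nodes_nested hC (a := c) (b := c')
    ⟨α, node_le_def.mp h1 hα, node_le_def.mp h2 hα⟩ with h | h
  · exact Or.inr (node_le_def.mpr h)
  · exact Or.inl (node_le_def.mpr h)

lemma cInd_iff (hC : IsCSet C) (x y z : Node C) :
    CInd C x y z ↔ infN hC x y < infN hC y z := by
  constructor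
  · rintro ⟨m1, m2, h1, h2, hlt⟩
    rw [infN_eq_of hC h2, infN_eq_of hC h1]
    exact hlt
  · intro h
    exact ⟨infN hC y z, infN hC x y, infN_spec hC y z, infN_spec hC x y, h⟩

lemma infN_eq_of_lt (hC : IsCSet C) {x y z : Node C}
    (h : infN hC x y < infN hC y z) : infN hC x z = infN hC x y := by
  have h1 : infN hC x y ≤ infN hC x z :=
    le_infN hC (infN_le_left hC x y) (h.le.trans (infN_le_right hC y z))
  rcases comparable_of_le hC (infN_le_right hC x z) (infN_le_right hC y z) with hc | hc
  · exact le_antisymm (le_infN hC (infN_le_left hC x z)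
      (hc.trans (infN_le_left hC y z))) h1
  · exact absurd (h.trans_le (le_infN hC (hc.trans (infN_le_left hC x z))
      (infN_le_left hC y z))) (lt_irrefl _)

lemma isCSet_cIndRel (hC : IsCSet C) {A : Set (Node C)}
    (hanti : IsAntichain (· ≤ ·) A) : IsCSet (CIndRel C A) := by
  constructor
  · intro x y z h
    have h' := (cInd_iff hC x.1 y.1 z.1).mp h
    refine (cInd_iff hC x.1 z.1 y.1).mpr ?_
    rw [infN_eq_of_lt hC h', infN_comm hC z.1 y.1]
    exact h'
  · intro x y z h h2
    have h' := (cInd_iff hC x.1 y.1 z.1).mp h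
    have h2' := (cInd_iff hC y.1 x.1 z.1).mp h2
    rw [infN_comm hC y.1 x.1, infN_eq_of_lt hC h'] at h2'
    exact lt_irrefl _ h2'
  · intro x y z w h
    have h' := (cInd_iff hC x.1 y.1 z.1).mp h
    by_cases hc : infN hC y.1 z.1 ≤ infN hC w.1 y.1
    · right
      refine (cInd_iff hC x.1 w.1 z.1).mpr ?_
      have hyzw : infN hC y.1 z.1 ≤ w.1 := hc.trans (infN_le_left hC w.1 y.1)
      have hwz : infN hC y.1 z.1 ≤ infN hC w.1 z.1 :=
        le_infN hC hyzw (infN_le_right hC y.1 z.1)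
      rcases comparable_of_le hC (infN_le_right hC x.1 w.1) hyzw with hcc | hcc
      · have hxw : infN hC x.1 w.1 ≤ infN hC x.1 y.1 :=
          le_infN hC (infN_le_left hC x.1 w.1) (hcc.trans (infN_le_left hC y.1 z.1))
        exact (hxw.trans_lt h').trans_le hwz
      · exact absurd (h'.trans_le (le_infN hC (hcc.trans (infN_le_left hC x.1 w.1))
          (infN_le_left hC y.1 z.1))) (lt_irrefl _)
    · left
      refine (cInd_iff hC w.1 y.1 z.1).mpr ?_
      rcases comparable_of_le hC (infN_le_right hC w.1 y.1) (infN_le_left hC y.1 z.1)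
        with hcc | hcc
      · exact lt_of_le_not_ge hcc hc
      · exact absurd hcc hc
  · intro x y hxy
    refine (cInd_iff hC x.1 y.1 y.1).mpr ?_
    rw [infN_self hC y.1]
    refine lt_of_le_not_ge (infN_le_right hC x.1 y.1) (fun hle => ?_)
    have hne : y.1 ≠ x.1 := fun e => hxy (Subtype.ext e.symm)
    exact hanti y.2 x.2 hne (hle.trans (infN_le_left hC x.1 y.1))

lemma lamSet_cIndRel (hC : IsCSet C) {A : Set (Node C)} (x y : ↥A) :
    lamSet (CIndRel C A) x y = {z : ↥A | infN hC x.1 y.1 ≤ z.1} := by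
  ext z
  simp only [lamSet, Set.mem_setOf_eq]
  constructor
  · intro h
    rcases comparable_of_le hC (infN_le_right hC z.1 x.1) (infN_le_left hC x.1 y.1)
      with hc | hc
    · rcases hc.lt_or_eq with hlt | heq
      · exact absurd ((cInd_iff hC z.1 x.1 y.1).mpr hlt) h
      · rw [← heq]
        exact infN_le_left hC z.1 x.1
    · exact hc.trans (infN_le_left hC z.1 x.1)
  · intro hle hcon
    have h := (cInd_iff hC z.1 x.1 y.1).mp hcon
    exact lt_irrefl _ (h.trans_le (le_infN hC hle (infN_le_left hC x.1 y.1)))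

lemma infClosure_iff (hC : IsCSet C) {A : Set (Node C)} {m : Node C} :
    InfClosure C A m ↔ ∃ a ∈ A, ∃ b ∈ A, IsInfN C a b m := by
  constructor
  · intro h
    induction h with
    | base ha => exact ⟨_, ha, _, ha, isInfN_self _⟩
    | @inf m1 m2 mm hh1 hh2 hm ih1 ih2 =>
      obtain ⟨a, ha, b, hb, hab⟩ := ih1
      obtain ⟨c, hc, d, hd, hcd⟩ := ih2
      have hZa : infN hC a c ≤ a := infN_le_left hC a c
      have hZc : infN hC a c ≤ c := infN_le_right hC a c
      rcases comparable_of_le hC hab.1 hZa with h1 | h1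
      · rcases comparable_of_le hC hcd.1 hZc with h2 | h2
        · rcases comparable_of_le hC h1 h2 with h12 | h12
          · have hmm : mm = m1 := le_antisymm hm.1 (hm.2.2 m1 le_rfl h12)
            exact ⟨a, ha, b, hb, by rw [hmm]; exact hab⟩
          · have hmm : mm = m2 := le_antisymm hm.2.1 (hm.2.2 m2 h12 le_rfl)
            exact ⟨c, hc, d, hd, by rw [hmm]; exact hcd⟩
        · have hmm : mm = m1 := le_antisymm hm.1 (hm.2.2 m1 le_rfl (h1.trans h2))
          exact ⟨a, ha, b, hb, by rw [hmm]; exact hab⟩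
      · rcases comparable_of_le hC hcd.1 hZc with h2 | h2
        · have hmm : mm = m2 := le_antisymm hm.2.1 (hm.2.2 m2 (h2.trans h1) le_rfl)
          exact ⟨c, hc, d, hd, by rw [hmm]; exact hcd⟩
        · refine ⟨a, ha, c, hc, hm.1.trans hab.1, hm.2.1.trans hcd.1,
            fun e hea hec => ?_⟩
          exact hm.2.2 e ((le_infN hC hea hec).trans h1) ((le_infN hC hea hec).trans h2)
  · rintro ⟨a, ha, b, hb, h⟩
    exact InfClosure.inf (InfClosure.base ha) (InfClosure.base hb) h

noncomputable def nodeInf (hC : IsCSet C) (A : Set (Node C))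
    (s : Node (CIndRel C A)) : Node C :=
  infN hC (s.2.choose).1 (s.2.choose_spec.choose).1

lemma nodeInf_eq (hC : IsCSet C) {A : Set (Node C)} {s : Node (CIndRel C A)}
    {x y : ↥A} (h : s.1 = lamSet (CIndRel C A) x y) :
    nodeInf hC A s = infN hC x.1 y.1 := by
  have h0 : s.1 = lamSet (CIndRel C A) s.2.choose s.2.choose_spec.choose :=
    s.2.choose_spec.choose_spec
  have hset := h0.symm.trans h
  rw [lamSet_cIndRel hC, lamSet_cIndRel hC] at hset
  have hx : infN hC (s.2.choose).1 (s.2.choose_spec.choose).1 ≤ x.1 :=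
    (Set.ext_iff.mp hset x).mpr (infN_le_left hC x.1 y.1)
  have hy : infN hC (s.2.choose).1 (s.2.choose_spec.choose).1 ≤ y.1 :=
    (Set.ext_iff.mp hset y).mpr (infN_le_right hC x.1 y.1)
  have hx' : infN hC x.1 y.1 ≤ (s.2.choose).1 :=
    (Set.ext_iff.mp hset s.2.choose).mp (infN_le_left hC _ _)
  have hy' : infN hC x.1 y.1 ≤ (s.2.choose_spec.choose).1 :=
    (Set.ext_iff.mp hset s.2.choose_spec.choose).mp (infN_le_right hC _ _)
  exact le_antisymm (le_infN hC hx hy) (le_infN hC hx' hy')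

lemma nodeInf_mem (hC : IsCSet C) {A : Set (Node C)} (s : Node (CIndRel C A)) :
    InfClosure C A (nodeInf hC A s) := by
  obtain ⟨x, y, h⟩ := s.2
  rw [nodeInf_eq hC h]
  exact InfClosure.inf (InfClosure.base x.2) (InfClosure.base y.2)
    (infN_spec hC x.1 y.1)

lemma nodeInf_le_iff (hC : IsCSet C) {A : Set (Node C)} (s t : Node (CIndRel C A)) :
    nodeInf hC A s ≤ nodeInf hC A t ↔ s ≤ t := by
  obtain ⟨x, y, hs⟩ := s.2
  obtain ⟨x', y', ht⟩ := t.2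
  rw [nodeInf_eq hC hs, nodeInf_eq hC ht]
  constructor
  · intro h
    show t.1 ⊆ s.1
    intro z hz
    rw [ht, lamSet_cIndRel hC] at hz
    rw [hs, lamSet_cIndRel hC]
    exact h.trans hz
  · intro h
    have hsub : t.1 ⊆ s.1 := h
    have hx' : x' ∈ t.1 := by
      rw [ht, lamSet_cIndRel hC]; exact infN_le_left hC x'.1 y'.1
    have hy' : y' ∈ t.1 := by
      rw [ht, lamSet_cIndRel hC]; exact infN_le_right hC x'.1 y'.1
    have h1 : infN hC x.1 y.1 ≤ x'.1 := by
      have := hsub hx'; rw [hs, lamSet_cIndRel hC] at this; exact this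
    have h2 : infN hC x.1 y.1 ≤ y'.1 := by
      have := hsub hy'; rw [hs, lamSet_cIndRel hC] at this; exact this
    exact le_infN hC h1 h2

end Statement16Aux

/-- The relation `C_A` induced on an antichain `A` of the canonical
tree of a `C`-set is a `C`-set relation, and the canonical tree of `(A, C_A)` is order
isomorphic to `cl_inf(A)` via the map induced by `(a,b) ↦ inf(a,b)`, leaves
corresponding to elements of `A`. -/
theorem statement16 {M : Type u} (C : M → M → M → Prop) (hC : IsCSet C)
    (A : Set (Node C)) (hAT : ∀ a ∈ A, ¬ IsLeaf C a)
    (hanti : IsAntichain (· ≤ ·) A) :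
    IsCSet (CIndRel C A) ∧
    ∃ e : Node (CIndRel C A) ≃o {m : Node C // InfClosure C A m},
      (∀ a b : ↥A, IsInfN C a.1 b.1 (e (node (CIndRel C A) a b)).1) ∧
      ∀ x : Node (CIndRel C A), IsLeaf (CIndRel C A) x ↔ ((e x).1 ∈ A) := by
  classical
  refine ⟨isCSet_cIndRel hC hanti, ?_⟩
  set F : Node (CIndRel C A) → {m : Node C // InfClosure C A m} :=
    fun s => ⟨nodeInf hC A s, nodeInf_mem hC s⟩ with hF
  have hrel : ∀ s t, F s ≤ F t ↔ s ≤ t := fun s t =>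
    (Subtype.mk_le_mk).trans (nodeInf_le_iff hC s t)
  have hinj : Function.Injective F := fun s t h =>
    le_antisymm ((hrel s t).mp h.le) ((hrel t s).mp h.ge)
  have hsurj : Function.Surjective F := by
    rintro ⟨m, hm⟩
    obtain ⟨a, ha, b, hb, hab⟩ := (infClosure_iff hC).mp hm
    refine ⟨node (CIndRel C A) ⟨a, ha⟩ ⟨b, hb⟩, ?_⟩
    apply Subtype.ext
    show nodeInf hC A _ = m
    rw [nodeInf_eq hC (x := (⟨a, ha⟩ : ↥A)) (y := (⟨b, hb⟩ : ↥A)) rfl]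
    exact infN_eq_of hC hab
  let e : Node (CIndRel C A) ≃o {m : Node C // InfClosure C A m} :=
    { toEquiv := Equiv.ofBijective F ⟨hinj, hsurj⟩
      map_rel_iff' := @fun s t => hrel s t }
  have he : ∀ s : Node (CIndRel C A), (e s).1 = nodeInf hC A s := fun s => rfl
  refine ⟨e, ?_, ?_⟩
  · intro a b
    have h1 : (e (node (CIndRel C A) a b)).1 = infN hC a.1 b.1 := by
      rw [he]
      exact nodeInf_eq hC rfl
    rw [h1]
    exact infN_spec hC a.1 b.1
  · intro x
    obtain ⟨x', y', hx⟩ := x.2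
    have hex : (e x).1 = infN hC x'.1 y'.1 := by
      rw [he]; exact nodeInf_eq hC hx
    constructor
    · rintro ⟨α, hα⟩
      have hx'mem : x' ∈ x.1 := by
        rw [hx, lamSet_cIndRel hC]; exact infN_le_left hC x'.1 y'.1
      have hy'mem : y' ∈ x.1 := by
        rw [hx, lamSet_cIndRel hC]; exact infN_le_right hC x'.1 y'.1
      rw [hα] at hx'mem hy'mem
      have e1 := Set.mem_singleton_iff.mp hx'mem
      have e2 := Set.mem_singleton_iff.mp hy'mem
      rw [hex, e1, e2, infN_self hC]
      exact α.2
    · intro hmem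
      refine ⟨⟨(e x).1, hmem⟩, ?_⟩
      rw [hx, lamSet_cIndRel hC]
      ext z
      simp only [Set.mem_setOf_eq, Set.mem_singleton_iff]
      constructor
      · intro hz
        have hle : (e x).1 ≤ z.1 := by rw [hex]; exact hz
        by_contra hne
        have hne' : (e x).1 ≠ z.1 := fun h => hne (Subtype.ext h.symm)
        exact hanti hmem z.2 hne' hle
      · intro hz
        rw [hz]
        show infN hC x'.1 y'.1 ≤ (e x).1
        rw [hex]


end CMinPaper
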